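/- For every complex number s with Re(s) > 1, one has ζ(2s)/ζ(s) = s · ∫_1^∞ L(x)/x^{s+1} dx, where L(x) = Σ_{n ≤ x} λ(n) is the summatory Liouville function; in particular the improper integral converges. -/

import Mathlib

open MeasureTheory ArithmeticFunction Complex LSeries

section auxLemmas
open scoped LSeries.notation
open scoped ArithmeticFunction.Omega ArithmeticFunction.zeta

noncomputable def liouvilleAF : ArithmeticFunction ℂ :=
  ⟨fun n => if n = 0 then 0 else (-1) ^ Ω n, by simp⟩

lemma liouvilleAF_apply {n : ℕ} (hn : n ≠ 0) : liouvilleAF n = (-1) ^ Ω n := if_neg hn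

lemma liouvilleAF_isMultiplicative : liouvilleAF.IsMultiplicative := by
  refine ⟨by simp [liouvilleAF], ?_⟩
  intro m n h
  rcases eq_or_ne m 0 with rfl | hm
  · rcases Nat.coprime_zero_left n |>.mp h with rfl
    simp [liouvilleAF]
  rcases eq_or_ne n 0 with rfl | hn
  · rcases Nat.coprime_zero_right m |>.mp h with rfl
    simp [liouvilleAF]
  rw [liouvilleAF_apply hm, liouvilleAF_apply hn, liouvilleAF_apply (Nat.mul_ne_zero hm hn),
    ArithmeticFunction.cardFactors_mul hm hn, pow_add]

noncomputable def sqIndicator : ArithmeticFunction ℂ :=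
  ⟨fun n => if n ≠ 0 ∧ IsSquare n then 1 else 0, by simp⟩

lemma isSquare_mul_iff_of_coprime {m n : ℕ} (hm : m ≠ 0) (hn : n ≠ 0) (h : Nat.Coprime m n) :
    IsSquare (m * n) ↔ IsSquare m ∧ IsSquare n := by
  constructor
  · rintro ⟨c, hc⟩
    have hgcd : IsUnit (gcd m n) := by
      rw [Nat.isUnit_iff]; exact h
    have h1 : ∃ d : ℕ, m = d ^ 2 := exists_eq_pow_of_mul_eq_pow hgcd (by rw [hc, sq])
    have h2 : ∃ d : ℕ, n = d ^ 2 := by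
      refine exists_eq_pow_of_mul_eq_pow (c := c) ?_ (by rw [mul_comm, hc, sq])
      rw [Nat.isUnit_iff, gcd_comm]; exact h
    obtain ⟨a, ha⟩ := h1; obtain ⟨b, hb⟩ := h2
    exact ⟨⟨a, by rw [ha, sq]⟩, ⟨b, by rw [hb, sq]⟩⟩
  · rintro ⟨⟨a, ha⟩, ⟨b, hb⟩⟩
    exact ⟨a * b, by rw [ha, hb]; ring⟩

lemma sqIndicator_isMultiplicative : sqIndicator.IsMultiplicative := by
  refine ⟨by simp [sqIndicator], ?_⟩
  intro m n h
  rcases eq_or_ne m 0 with rfl | hm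
  · rcases Nat.coprime_zero_left n |>.mp h with rfl
    simp [sqIndicator]
  rcases eq_or_ne n 0 with rfl | hn
  · rcases Nat.coprime_zero_right m |>.mp h with rfl
    simp [sqIndicator]
  simp only [sqIndicator, ArithmeticFunction.coe_mk, Nat.mul_ne_zero hm hn, hm, hn,
    ne_eq, not_false_eq_true, true_and, isSquare_mul_iff_of_coprime hm hn h]
  by_cases h1 : IsSquare m <;> by_cases h2 : IsSquare n <;> simp [h1, h2]

lemma isSquare_prime_pow_iff {p : ℕ} (hp : p.Prime) (k : ℕ) : IsSquare (p ^ k) ↔ Even k := by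
  constructor
  · rintro ⟨r, hr⟩
    have : (p ^ k).factorization p = k := by
      simp [Nat.Prime.factorization_pow hp]
    rw [hr, ← sq, Nat.factorization_pow] at this
    rw [← this]
    simp [Finsupp.smul_apply]
  · rintro ⟨j, rfl⟩
    exact ⟨p ^ j, by rw [← pow_add]⟩

lemma liouville_mul_zeta : liouvilleAF * (ζ : ArithmeticFunction ℂ) = sqIndicator := by
  rw [ArithmeticFunction.IsMultiplicative.eq_iff_eq_on_prime_powers _
    (liouvilleAF_isMultiplicative.mul isMultiplicative_zeta.natCast) _
    sqIndicator_isMultiplicative]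
  intro p i hp
  rw [ArithmeticFunction.coe_mul_zeta_apply, Nat.sum_divisors_prime_pow hp]
  have : ∀ j, liouvilleAF (p ^ j) = (-1 : ℂ) ^ j := fun j => by
    rw [liouvilleAF_apply (pow_ne_zero j hp.pos.ne'),
      ArithmeticFunction.cardFactors_apply_prime_pow hp]
  simp_rw [this]
  have hsum : ∑ j ∈ Finset.range (i + 1), (-1 : ℂ) ^ j = if Even (i+1) then 0 else 1 :=
    neg_one_geom_sum
  rw [hsum]
  have : sqIndicator (p ^ i) = if Even i then 1 else 0 := by
    simp only [sqIndicator, ArithmeticFunction.coe_mk, pow_ne_zero i hp.pos.ne', ne_eq,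
      not_false_eq_true, true_and, isSquare_prime_pow_iff hp]
  rw [this]
  simp only [Nat.even_add_one]
  by_cases h : Even i <;> simp [h]

lemma lsSummable {s : ℂ} (hs : 1 < s.re) : LSeriesSummable (↗liouvilleAF) s := by
  refine LSeriesSummable_of_bounded_of_one_lt_re (m := 1) (fun n hn => ?_) hs
  rw [liouvilleAF_apply hn]
  simp

lemma lsq {s : ℂ} (hs : 1 < s.re) : LSeries (↗sqIndicator) s = riemannZeta (2 * s) := by
  have hs2 : 1 < (2 * s).re := by
    simp only [mul_re, ofReal_re]
    norm_num
    nlinarith [hs]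
  rw [← LSeries_one_eq_riemannZeta hs2]
  unfold LSeries
  refine (Function.Injective.tsum_eq (g := fun m : ℕ => m ^ 2)
    (Nat.pow_left_injective two_ne_zero) (f := fun n => term (↗sqIndicator) s n)
    ?_).symm.trans (tsum_congr fun m => ?_)
  · intro n hn
    simp only [Function.mem_support, ne_eq] at hn
    by_contra hcon
    apply hn
    rcases eq_or_ne n 0 with rfl | hn0
    · exact absurd ⟨0, rfl⟩ hcon
    rw [term_of_ne_zero hn0]
    have hns : ¬ IsSquare n := by
      rintro ⟨r, rfl⟩
      exact hcon ⟨r, by simpa using sq r⟩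
    simp [sqIndicator, hns]
  · rcases eq_or_ne m 0 with rfl | hm
    · simp [term]
    have hm2 : (m : ℕ) ^ 2 ≠ 0 := pow_ne_zero 2 hm
    rw [term_of_ne_zero hm2, term_of_ne_zero hm]
    have hsq : sqIndicator (m ^ 2) = 1 := by
      simp [sqIndicator, hm, hm2, sq, IsSquare.mul_self]
    rw [hsq]
    have hcpow : ((m : ℂ) ^ 2) ^ s = (m : ℂ) ^ (2 * s) := by
      have hm0 : (m : ℂ) ≠ 0 := Nat.cast_ne_zero.mpr hm
      have h1 : ((m : ℂ)) ^ (2 * s) = (m : ℂ) ^ (s + s) := by ring_nf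
      rw [h1, cpow_add _ _ hm0, sq]
      have : ((m : ℂ) * (m : ℂ)) ^ s = (m : ℂ) ^ s * (m : ℂ) ^ s := by
        have := Complex.mul_cpow_ofReal_nonneg (Nat.cast_nonneg m) (Nat.cast_nonneg m) s
        push_cast at this ⊢
        exact this
      rw [this]
    push_cast
    rw [hcpow]
    simp

lemma lsL {s : ℂ} (hs : 1 < s.re) :
    LSeries (↗liouvilleAF) s = riemannZeta (2 * s) / riemannZeta s := by
  have hz : LSeries (↗(ζ : ArithmeticFunction ℂ)) s = riemannZeta s := by
    rw [← LSeries_zeta_eq_riemannZeta hs]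
    congr 1
  have hmul := LSeries_mul' (f := liouvilleAF) (g := (ζ : ArithmeticFunction ℂ)) (s := s)
    (lsSummable hs) ?_
  · rw [liouville_mul_zeta] at hmul
    rw [lsq hs] at hmul
    rw [hmul, hz]
    field_simp [riemannZeta_ne_zero_of_one_lt_re hs]
  · refine LSeriesSummable_of_bounded_of_one_lt_re (m := 1) (fun n hn => ?_) hs
    simp [ArithmeticFunction.natCoe_apply, ArithmeticFunction.zeta_apply, hn]

end auxLemmas

lemma cpow_ne_zero_of_ne_zero {z : ℂ} (hz : z ≠ 0) (w : ℂ) : z ^ w ≠ 0 := by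
  simp [Complex.cpow_eq_zero_iff, hz]

lemma contAt_ofReal_cpow_const {t : ℝ} (ht : t ≠ 0) (w : ℂ) :
    ContinuousAt (fun u : ℝ => (u : ℂ) ^ w) t := by
  have h0 : ContinuousAt (fun u : ℝ => ((u, w) : ℝ × ℂ)) t :=
    (continuous_id.prodMk continuous_const).continuousAt
  exact ContinuousAt.comp (f := fun u : ℝ => ((u, w) : ℝ × ℂ)) (continuousAt_ofReal_cpow t w (Or.inr ht)) h0

theorem zeta_ratio_eq_integral_summatory_liouville (L : ℝ → ℂ)
    (hL : ∀ x : ℝ, L x = ∑ n ∈ Finset.Icc 1 ⌊x⌋₊, (-1 : ℂ) ^ (ArithmeticFunction.cardFactors n))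
    (s : ℂ) (hs : 1 < s.re) :
    IntegrableOn (fun x : ℝ => L x / (x : ℂ) ^ (s + 1)) (Set.Ioi 1) ∧
    riemannZeta (2 * s) / riemannZeta s =
      s * ∫ x in Set.Ioi (1 : ℝ), L x / (x : ℂ) ^ (s + 1) := by
  classical
  set c : ℕ → ℂ := fun n => liouvilleAF n with hc
  have hc0 : c 0 = 0 := by simp [hc, liouvilleAF]
  -- L equals the partial sums of c starting at 0
  have hLc : ∀ x : ℝ, L x = ∑ k ∈ Finset.Icc 0 ⌊x⌋₊, c k := by
    intro x
    rw [hL x]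
    have hins : Finset.Icc 0 ⌊x⌋₊ = insert 0 (Finset.Icc 1 ⌊x⌋₊) := by
      ext k; simp; omega
    rw [hins, Finset.sum_insert (by simp), hc0, zero_add]
    refine Finset.sum_congr rfl fun k hk => ?_
    show _ = liouvilleAF k
    rw [liouvilleAF_apply (by simp at hk; omega)]
  -- bound on L
  have hLbound : ∀ x : ℝ, 0 ≤ x → ‖L x‖ ≤ x := by
    intro x hx
    rw [hL x]
    calc ‖∑ k ∈ Finset.Icc 1 ⌊x⌋₊, (-1 : ℂ) ^ (ArithmeticFunction.cardFactors k)‖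
        ≤ ∑ k ∈ Finset.Icc 1 ⌊x⌋₊, ‖(-1 : ℂ) ^ (ArithmeticFunction.cardFactors k)‖ :=
          norm_sum_le _ _
    _ ≤ ∑ _k ∈ Finset.Icc 1 ⌊x⌋₊, 1 := by
        refine Finset.sum_le_sum fun k _ => ?_
        simp
    _ = (⌊x⌋₊ : ℝ) := by simp [Nat.card_Icc]
    _ ≤ x := Nat.floor_le hx
  have hs0 : s ≠ 0 := ne_zero_of_one_lt_re hs
  -- the decay function and its derivative
  set F : ℝ → ℂ := fun t => (t : ℂ) ^ (-s) with hF
  have hderiv : ∀ t : ℝ, 0 < t → HasDerivAt F (-s * (t : ℂ) ^ (-s - 1)) t := by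
    intro t ht
    have h1 : (-s - 1 : ℂ) ≠ -1 := by
      intro h; apply hs0; linear_combination -h
    have key := (hasDerivAt_ofReal_cpow_const' ht.ne' h1).const_mul (-s)
    simp only [show (-s - 1 + 1 : ℂ) = -s by ring] at key
    have heq : (fun y : ℝ => -s * ((y : ℂ) ^ (-s) / (-s))) = F := by
      funext y; rw [hF]; field_simp
    rwa [heq] at key
  have hderiv_eq : ∀ t : ℝ, 0 < t → deriv F t = -s * (t : ℂ) ^ (-s - 1) :=
    fun t ht => (hderiv t ht).deriv
  have hdiff : ∀ b : ℝ, ∀ t ∈ Set.Icc (1 : ℝ) b, DifferentiableAt ℝ F t :=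
    fun b t ht => (hderiv t (by linarith [ht.1])).differentiableAt
  have hcont : ∀ b : ℝ, IntegrableOn (deriv F) (Set.Icc 1 b) := by
    intro b
    have heq : Set.EqOn (deriv F) (fun t : ℝ => -s * (t : ℂ) ^ (-s - 1)) (Set.Icc 1 b) :=
      fun t ht => hderiv_eq t (by linarith [ht.1])
    rw [integrableOn_congr_fun heq measurableSet_Icc]
    refine ContinuousOn.integrableOn_compact isCompact_Icc ?_
    intro t ht
    have ht0 : t ≠ 0 := by
      have := ht.1; intro h; rw [h] at this; linarith
    refine ContinuousAt.continuousWithinAt ?_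
    exact continuousAt_const.mul (contAt_ofReal_cpow_const ht0 _)
  -- Abel summation identity for every b ≥ 1
  have habel : ∀ b : ℝ, 1 ≤ b →
      s * ∫ t in Set.Ioc (1 : ℝ) b, L t / (t : ℂ) ^ (s + 1) =
        (∑ k ∈ Finset.Icc 0 ⌊b⌋₊, LSeries.term c s k) - F b * L b := by
    intro b hb
    have H := sum_mul_eq_sub_integral_mul₀ (f := F) c hc0 b (hdiff b) (hcont b)
    have h1 : ∀ k : ℕ, F (k : ℝ) * c k = LSeries.term c s k := by
      intro k
      rcases eq_or_ne k 0 with rfl | hk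
      · simp [hc0]
      · rw [LSeries.term_of_ne_zero hk, hF]
        push_cast
        rw [cpow_neg]
        have hk0 : ((k : ℂ)) ^ s ≠ 0 :=
          cpow_ne_zero_of_ne_zero (Nat.cast_ne_zero.mpr hk) _
        field_simp
    have h2 : ∫ t in Set.Ioc (1 : ℝ) b, deriv F t * ∑ k ∈ Finset.Icc 0 ⌊t⌋₊, c k
        = -s * ∫ t in Set.Ioc (1 : ℝ) b, L t / (t : ℂ) ^ (s + 1) := by
      rw [← MeasureTheory.integral_const_mul]
      refine setIntegral_congr_fun measurableSet_Ioc fun t ht => ?_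
      have ht0 : 0 < t := lt_trans one_pos ht.1
      rw [hderiv_eq t ht0, ← hLc t, show (-s - 1 : ℂ) = -(s + 1) by ring, cpow_neg]
      have hts : ((t : ℂ)) ^ (s + 1) ≠ 0 :=
        cpow_ne_zero_of_ne_zero (by exact_mod_cast ht0.ne') _
      field_simp
    have hsum_eq : ∑ k ∈ Finset.Icc 0 ⌊b⌋₊, LSeries.term c s k
        = ∑ k ∈ Finset.Icc 0 ⌊b⌋₊, F (k : ℝ) * c k :=
      Finset.sum_congr rfl fun k _ => (h1 k).symm
    rw [hsum_eq, H, ← hLc b, h2]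
    ring
  -- integrability on Ioi 1
  have hmeasL : Measurable L := by
    have : L = (fun n : ℕ => ∑ k ∈ Finset.Icc 1 n,
        (-1 : ℂ) ^ (ArithmeticFunction.cardFactors k)) ∘ (fun x : ℝ => ⌊x⌋₊) := by
      funext x; exact hL x
    rw [this]
    exact measurable_from_nat.comp Nat.measurable_floor
  have hintg : IntegrableOn (fun x : ℝ => L x / (x : ℂ) ^ (s + 1)) (Set.Ioi 1) := by
    have hmeas : AEStronglyMeasurable (fun x : ℝ => L x / (x : ℂ) ^ (s + 1))
        (volume.restrict (Set.Ioi 1)) := by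
      simp only [div_eq_mul_inv]
      refine AEStronglyMeasurable.mul hmeasL.aestronglyMeasurable ?_
      refine ContinuousOn.aestronglyMeasurable ?_ measurableSet_Ioi
      intro t ht
      have ht0 : t ≠ 0 := by
        have : (1 : ℝ) < t := ht; intro h; rw [h] at this; linarith
      refine ContinuousAt.continuousWithinAt (ContinuousAt.inv₀ ?_ ?_)
      · exact contAt_ofReal_cpow_const ht0 _
      · exact cpow_ne_zero_of_ne_zero (by exact_mod_cast ht0) _
    refine Integrable.mono
      (integrableOn_Ioi_rpow_of_lt (show -s.re < -1 by linarith) one_pos) hmeas ?_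
    filter_upwards [ae_restrict_mem measurableSet_Ioi] with x hx
    have hx1 : (1 : ℝ) < x := hx
    have hx0 : (0 : ℝ) < x := lt_trans one_pos hx1
    rw [norm_div]
    have hnorm : ‖(x : ℂ) ^ (s + 1)‖ = x ^ (s.re + 1) := by
      rw [Complex.norm_cpow_eq_rpow_re_of_pos hx0]
      simp
    rw [hnorm, Real.norm_of_nonneg (Real.rpow_nonneg hx0.le _)]
    rw [div_le_iff₀ (by positivity)]
    calc ‖L x‖ ≤ x := hLbound x hx0.le
    _ = x ^ (-s.re) * x ^ (s.re + 1) := by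
        rw [← Real.rpow_add hx0]; norm_num
  -- limit statements
  have hsummable : LSeriesSummable c s := lsSummable hs
  have htend_sum : Filter.Tendsto (fun b : ℝ => ∑ k ∈ Finset.Icc 0 ⌊b⌋₊, LSeries.term c s k)
      Filter.atTop (nhds (LSeries c s)) := by
    have h1 : Filter.Tendsto (fun n : ℕ => ∑ k ∈ Finset.Icc 0 n, LSeries.term c s k)
        Filter.atTop (nhds (LSeries c s)) := by
      have h2 := hsummable.hasSum.tendsto_sum_nat
      have h3 := h2.comp (Filter.tendsto_add_atTop_nat 1)
      refine h3.congr fun n => ?_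
      simp only [Function.comp_apply]
      rw [show Finset.range (n + 1) = Finset.Icc 0 n by
        ext k; simp [Nat.lt_succ_iff]]
    exact h1.comp tendsto_nat_floor_atTop
  have htend_Fb : Filter.Tendsto (fun b : ℝ => F b * L b) Filter.atTop (nhds 0) := by
    have hb : ∀ᶠ b : ℝ in Filter.atTop, ‖F b * L b‖ ≤ b ^ (1 - s.re) := by
      filter_upwards [Filter.eventually_ge_atTop 1] with b hb
      have hb0 : (0 : ℝ) < b := lt_of_lt_of_le one_pos hb
      rw [norm_mul]
      have h1 : ‖F b‖ = b ^ (-s.re) := by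
        rw [hF, Complex.norm_cpow_eq_rpow_re_of_pos hb0]
        simp
      rw [h1]
      calc b ^ (-s.re) * ‖L b‖ ≤ b ^ (-s.re) * b :=
            mul_le_mul_of_nonneg_left (hLbound b hb0.le) (Real.rpow_nonneg hb0.le _)
      _ = b ^ (1 - s.re) := by
            rw [show (1 : ℝ) - s.re = -s.re + 1 by ring, Real.rpow_add hb0, Real.rpow_one]
    have h2 := tendsto_rpow_neg_atTop (show (0 : ℝ) < s.re - 1 by linarith)
    rw [neg_sub] at h2
    exact squeeze_zero_norm' hb h2
  have hint_tendsto : Filter.Tendsto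
      (fun b : ℝ => ∫ t in Set.Ioc (1 : ℝ) b, L t / (t : ℂ) ^ (s + 1))
      Filter.atTop (nhds (∫ x in Set.Ioi (1 : ℝ), L x / (x : ℂ) ^ (s + 1))) := by
    have h := MeasureTheory.intervalIntegral_tendsto_integral_Ioi 1 hintg Filter.tendsto_id
    refine h.congr' ?_
    filter_upwards [Filter.eventually_ge_atTop 1] with b hb
    simp only [id_eq]
    rw [intervalIntegral.integral_of_le hb]
  have h1 : Filter.Tendsto
      (fun b : ℝ => s * ∫ t in Set.Ioc (1 : ℝ) b, L t / (t : ℂ) ^ (s + 1))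
      Filter.atTop (nhds (s * ∫ x in Set.Ioi (1 : ℝ), L x / (x : ℂ) ^ (s + 1))) :=
    hint_tendsto.const_mul s
  have h2 : Filter.Tendsto
      (fun b : ℝ => s * ∫ t in Set.Ioc (1 : ℝ) b, L t / (t : ℂ) ^ (s + 1))
      Filter.atTop (nhds (LSeries c s)) := by
    have h3 := htend_sum.sub htend_Fb
    rw [sub_zero] at h3
    refine h3.congr' ?_
    filter_upwards [Filter.eventually_ge_atTop 1] with b hb
    exact (habel b hb).symm
  have hkey : LSeries c s = s * ∫ x in Set.Ioi (1 : ℝ), L x / (x : ℂ) ^ (s + 1) :=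
    tendsto_nhds_unique h2 h1
  refine ⟨hintg, ?_⟩
  rw [← lsL hs]
  exact hkey
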